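/- Let S be a type of states, let A_i and A₋ be finite nonempty types of actions, let T : S → A_i → A₋ → S be a transition function, let R : S → ℝ be a terminal reward, and let A', A'' : S → Set A_i be action-abstraction maps with A'(s) ⊆ A''(s) and A'(s) nonempty for every state s. Define the depth-n values V^n_X(s) for X ∈ {A', A'', full} by V⁰_X(s) = R(s) and V^{n+1}_X(s) = sup over mixed strategies σ on A_i supported in X(s), of the inf over mixed strategies τ on A₋, of ∑_{a} ∑_{b} σ(a) · τ(b) · V^n_X(T s a b), where 'full' denotes the un-abstracted map s ↦ A_i. Then for every n ∈ ℕ and every state s, V^n_{full}(s) ≥ V^n_{A''}(s) ≥ V^n_{A'}(s). -/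
import Mathlib


/-- Mixed strategies over a finite type `A` whose support is contained in `X`. -/
def stratsOn {A : Type*} [Fintype A] (X : Set A) : Set (A → ℝ) :=
  {σ | (∀ a, 0 ≤ σ a) ∧ (∑ a, σ a = 1) ∧ {a | 0 < σ a} ⊆ X}

/-- Depth-`n` optimal value of the abstracted simultaneous-move zero-sum game:
the maximizer's mixed strategies must be supported in `X s`, the minimizer may
use any mixed strategy. -/
noncomputable def absValue {S A B : Type*} [Fintype A] [Fintype B]
    (T : S → A → B → S) (R : S → ℝ) (X : S → Set A) : ℕ → S → ℝ
  | 0, s => R s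
  | n + 1, s =>
      sSup ((fun σ =>
        sInf ((fun τ => ∑ a, ∑ b, σ a * τ b * absValue T R X n (T s a b)) ''
          stratsOn (Set.univ : Set B))) '' stratsOn (X s))

lemma stratsOn_nonempty {A : Type*} [Fintype A] {X : Set A} (hX : X.Nonempty) :
    (stratsOn X).Nonempty := by
  classical
  obtain ⟨a, ha⟩ := hX
  refine ⟨fun b => if b = a then 1 else 0, fun b => by dsimp only; split <;> norm_num, by simp, ?_⟩
  intro b hb
  simp only [Set.mem_setOf_eq] at hb
  by_cases h : b = a
  · subst h; exact ha
  · simp [h] at hb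

lemma stratsOn_le_one {A : Type*} [Fintype A] {X : Set A} {σ : A → ℝ}
    (hσ : σ ∈ stratsOn X) (a : A) : σ a ≤ 1 := by
  have := Finset.single_le_sum (fun i _ => hσ.1 i) (Finset.mem_univ a)
  rw [hσ.2.1] at this
  exact this

lemma payoff_abs_le {A B : Type*} [Fintype A] [Fintype B] {X : Set A} {Y : Set B}
    {σ : A → ℝ} (hσ : σ ∈ stratsOn X) {τ : B → ℝ} (hτ : τ ∈ stratsOn Y)
    (c : A → B → ℝ) (a : A) (b : B) :
    -|c a b| ≤ σ a * τ b * c a b ∧ σ a * τ b * c a b ≤ |c a b| := by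
  have habs : |σ a * τ b * c a b| ≤ |c a b| := by
    rw [abs_mul, abs_mul, abs_of_nonneg (hσ.1 a), abs_of_nonneg (hτ.1 b), mul_assoc]
    have h1 : σ a * τ b ≤ 1 :=
      mul_le_one₀ (stratsOn_le_one hσ a) (hτ.1 b) (stratsOn_le_one hτ b)
    calc σ a * (τ b * |c a b|) ≤ σ a * τ b * |c a b| := by ring_nf; exact le_rfl
      _ ≤ 1 * |c a b| := mul_le_mul_of_nonneg_right h1 (abs_nonneg _)
      _ = |c a b| := one_mul _
  have := abs_le.mp habs
  exact ⟨this.1, this.2⟩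

lemma step_mono {A B : Type*} [Fintype A] [Fintype B] [Nonempty B]
    {X Y : Set A} (hXY : X ⊆ Y) (hX : X.Nonempty)
    {c d : A → B → ℝ} (hcd : ∀ a b, c a b ≤ d a b) :
    sSup ((fun σ =>
        sInf ((fun τ => ∑ a, ∑ b, σ a * τ b * c a b) '' stratsOn (Set.univ : Set B)))
        '' stratsOn X) ≤
    sSup ((fun σ =>
        sInf ((fun τ => ∑ a, ∑ b, σ a * τ b * d a b) '' stratsOn (Set.univ : Set B)))
        '' stratsOn Y) := by
  have hTne : (stratsOn (Set.univ : Set B)).Nonempty :=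
    stratsOn_nonempty Set.univ_nonempty
  -- bddBelow of inner images
  have hbdd : ∀ (e : A → B → ℝ) (σ : A → ℝ), σ ∈ stratsOn Y →
      BddBelow ((fun τ => ∑ a, ∑ b, σ a * τ b * e a b) '' stratsOn (Set.univ : Set B)) := by
    intro e σ hσ
    refine ⟨∑ a, ∑ b, -|e a b|, ?_⟩
    rintro x ⟨τ, hτ, rfl⟩
    exact Finset.sum_le_sum fun a _ => Finset.sum_le_sum fun b _ =>
      (payoff_abs_le hσ hτ e a b).1
  -- bddAbove of the outer image (for d)
  have hbddA : BddAbove ((fun σ =>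
      sInf ((fun τ => ∑ a, ∑ b, σ a * τ b * d a b) '' stratsOn (Set.univ : Set B)))
      '' stratsOn Y) := by
    refine ⟨∑ a, ∑ b, |d a b|, ?_⟩
    rintro x ⟨σ, hσ, rfl⟩
    obtain ⟨τ, hτ⟩ := hTne
    calc sInf _ ≤ ∑ a, ∑ b, σ a * τ b * d a b :=
          csInf_le (hbdd d σ hσ) ⟨τ, hτ, rfl⟩
      _ ≤ ∑ a, ∑ b, |d a b| :=
          Finset.sum_le_sum fun a _ => Finset.sum_le_sum fun b _ =>
            (payoff_abs_le hσ hτ d a b).2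
  apply csSup_le ((stratsOn_nonempty hX).image _)
  rintro x ⟨σ, hσ, rfl⟩
  have hσY : σ ∈ stratsOn Y := ⟨hσ.1, hσ.2.1, hσ.2.2.trans hXY⟩
  have hinner : sInf ((fun τ => ∑ a, ∑ b, σ a * τ b * c a b)
      '' stratsOn (Set.univ : Set B)) ≤
      sInf ((fun τ => ∑ a, ∑ b, σ a * τ b * d a b) '' stratsOn (Set.univ : Set B)) := by
    apply le_csInf (hTne.image _)
    rintro x ⟨τ, hτ, rfl⟩
    calc sInf _ ≤ ∑ a, ∑ b, σ a * τ b * c a b :=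
          csInf_le (hbdd c σ hσY) ⟨τ, hτ, rfl⟩
      _ ≤ ∑ a, ∑ b, σ a * τ b * d a b :=
          Finset.sum_le_sum fun a _ => Finset.sum_le_sum fun b _ => by
            have := hcd a b
            nlinarith [hσ.1 a, hτ.1 b, mul_nonneg (hσ.1 a) (hτ.1 b)]
  exact hinner.trans (le_csSup hbddA ⟨σ, hσY, rfl⟩)

/-- The optimal value of the un-abstracted game is at least that of the
asymmetrically abstracted game, which is at least that of the uniformly
abstracted game. -/
theorem absValue_chain
    {S A B : Type*} [Fintype A] [Fintype B] [Nonempty A] [Nonempty B]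
    (T : S → A → B → S) (R : S → ℝ) (A' A'' : S → Set A)
    (hsub : ∀ s, A' s ⊆ A'' s) (hne : ∀ s, (A' s).Nonempty) :
    ∀ (n : ℕ) (s : S),
      absValue T R A' n s ≤ absValue T R A'' n s ∧
      absValue T R A'' n s ≤ absValue T R (fun _ => (Set.univ : Set A)) n s := by
  intro n
  induction n with
  | zero => intro s; exact ⟨le_rfl, le_rfl⟩
  | succ n ih =>
    intro s
    constructor
    · show sSup _ ≤ sSup _
      exact step_mono (hsub s) (hne s) (fun a b => (ih (T s a b)).1)
    · show sSup _ ≤ sSup _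
      exact step_mono (Set.subset_univ _) ((hne s).mono (hsub s))
        (fun a b => (ih (T s a b)).2)
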